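/- For each k ∈ ℕ, let H0,k be a finite index set with |H0,k| → ∞ as k → ∞, and let (T_{g,k})_{g∈H0,k} be real random variables on a probability space such that (a) t ↦ L_k^0(t) := (1/|H0,k|) Σ_{g∈H0,k} P(T_{g,k} > t) is continuous on ℝ for each k, and (b) there exist constants c > 0 and λ ∈ (0,2), not depending on k, with Σ_{g≠h∈H0,k} Cov(1{T_{g,k} > t}, 1{T_{h,k} > t}) ≤ c·|H0,k|^λ for all t ∈ ℝ. Define L̂_k^0(t) = (1/|H0,k|) Σ_{g∈H0,k} 1{T_{g,k} > t}. Then sup_{t∈ℝ} |L̂_k^0(t) − L_k^0(t)| → 0 in probability as k → ∞. If moreover the null vector (T_{g,k})_{g∈H0,k} has the same joint distribution as (−T_{g,k})_{g∈H0,k}, then also sup_{t∈ℝ} |V̂_k^0(t) − L_k^0(t)| → 0 in probability, where V̂_k^0(t) = (1/|H0,k|) Σ_{g∈H0,k} 1{T_{g,k} < −t}. -/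

import Mathlib

open MeasureTheory Filter ProbabilityTheory

/-!
STATEMENT 16 (Lemma 1 of the supplementary material).

A uniform law of large numbers for empirical survival functions of weakly dependent
(in covariance) families: if `|H0,k| → ∞`, the averaged survival function
`L_k⁰(t) = (1/|H0,k|) Σ_g P(T_{g,k} > t)` is continuous in `t`, and the pairwise
covariances of the indicators `1{T_{g,k} > t}` satisfy the weak-dependence bound
`Σ_{g≠h} Cov ≤ c·|H0,k|^λ` with `λ ∈ (0,2)`, then
`sup_t |L̂_k⁰(t) − L_k⁰(t)| → 0` in probability; and under sign-symmetry of the null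
vector also `sup_t |V̂_k⁰(t) − L_k⁰(t)| → 0` in probability.
-/

/-- Covariance of two real random variables. -/
noncomputable def cov16 {Ω : Type*} [MeasurableSpace Ω] (X Y : Ω → ℝ) (P : Measure Ω) : ℝ :=
  (∫ ω, X ω * Y ω ∂P) - (∫ ω, X ω ∂P) * (∫ ω, Y ω ∂P)

/-! ### Auxiliary lemmas -/

lemma toReal_le_one16 {Ω : Type} [MeasurableSpace Ω] (P : Measure Ω) [IsProbabilityMeasure P]
    (s : Set Ω) : (P s).toReal ≤ 1 := by
  have := ENNReal.toReal_mono ENNReal.one_ne_top (prob_le_one (μ := P) (s := s))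
  simpa using this


lemma avg16_nonneg {n : ℕ} (f : Fin n → ℝ) (hf : ∀ g, 0 ≤ f g) :
    0 ≤ (1/(n:ℝ)) * ∑ g : Fin n, f g :=
  mul_nonneg (by positivity) (Finset.sum_nonneg fun g _ => hf g)

lemma avg16_le_one {n : ℕ} (hn : 1 ≤ n) (f : Fin n → ℝ) (hf : ∀ g, f g ≤ 1) :
    (1/(n:ℝ)) * ∑ g : Fin n, f g ≤ 1 := by
  have hn0 : (0:ℝ) < (n:ℝ) := by exact_mod_cast hn
  have h1 : ∑ g : Fin n, f g ≤ (n:ℝ) := by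
    calc ∑ g : Fin n, f g ≤ ∑ _g : Fin n, (1:ℝ) := Finset.sum_le_sum fun g _ => hf g
      _ = (n:ℝ) := by simp
  calc (1/(n:ℝ)) * ∑ g : Fin n, f g ≤ (1/(n:ℝ)) * (n:ℝ) :=
        mul_le_mul_of_nonneg_left h1 (by positivity)
    _ = 1 := by field_simp

/-- Chebyshev-type bound for an average of `{0,1}`-valued random variables with a bound on the
sum of off-diagonal covariances. -/
lemma cheb16 {Ω : Type} [MeasurableSpace Ω] (P : Measure Ω) [IsProbabilityMeasure P]
    {n : ℕ} (hn : 1 ≤ n)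
    (X : Fin n → Ω → ℝ) (hXm : ∀ g, Measurable (X g))
    (hX01 : ∀ g ω, X g ω = 0 ∨ X g ω = 1)
    (C : ℝ)
    (hC : ∑ g : Fin n, ∑ g' ∈ Finset.univ.erase g, cov16 (X g) (X g') P ≤ C)
    (a : ℝ) (ha : 0 < a) :
    P {ω | a ≤ |(1/(n:ℝ)) * ∑ g : Fin n, X g ω
        - (1/(n:ℝ)) * ∑ g : Fin n, ∫ ω', X g ω' ∂P|}
      ≤ ENNReal.ofReal (((n:ℝ)/4 + C) / ((n:ℝ)^2 * a^2)) := by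
  have hn0 : (0:ℝ) < (n:ℝ) := by exact_mod_cast hn
  have hX0 : ∀ g ω, 0 ≤ X g ω := fun g ω => by rcases hX01 g ω with h | h <;> simp [h]
  have hX1 : ∀ g ω, X g ω ≤ 1 := fun g ω => by rcases hX01 g ω with h | h <;> simp [h]
  have hXi : ∀ g, Integrable (X g) P := fun g =>
    ⟨(hXm g).aestronglyMeasurable, HasFiniteIntegral.of_bounded (C := 1)
      (ae_of_all _ fun ω => by
        rw [Real.norm_eq_abs, abs_of_nonneg (hX0 g ω)]; exact hX1 g ω)⟩
  set p : Fin n → ℝ := fun g => ∫ ω, X g ω ∂P with hp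
  have hp0 : ∀ g, 0 ≤ p g := fun g => integral_nonneg (hX0 g)
  have hp1 : ∀ g, p g ≤ 1 := fun g => by
    have := integral_mono (hXi g) (integrable_const (1:ℝ)) (fun ω => hX1 g ω)
    simpa [measure_univ] using this
  set S : Ω → ℝ := fun ω => (1/(n:ℝ)) * ∑ g, X g ω with hS
  set m : ℝ := (1/(n:ℝ)) * ∑ g, p g with hm
  have hSm : Measurable S := (Finset.measurable_sum Finset.univ fun g _ => hXm g).const_mul _
  have hS0 : ∀ ω, 0 ≤ S ω := fun ω =>
    mul_nonneg (by positivity) (Finset.sum_nonneg fun g _ => hX0 g ω)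
  have hS1 : ∀ ω, S ω ≤ 1 := by
    intro ω
    have h1 : ∑ g, X g ω ≤ (n:ℝ) := by
      calc ∑ g : Fin n, X g ω ≤ ∑ _g : Fin n, (1:ℝ) := Finset.sum_le_sum fun g _ => hX1 g ω
        _ = (n:ℝ) := by simp
    calc S ω ≤ (1/(n:ℝ)) * (n:ℝ) := mul_le_mul_of_nonneg_left h1 (by positivity)
      _ = 1 := by field_simp
  have hm0 : 0 ≤ m := mul_nonneg (by positivity) (Finset.sum_nonneg fun g _ => hp0 g)
  have hm1 : m ≤ 1 := by
    have h1 : ∑ g, p g ≤ (n:ℝ) := by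
      calc ∑ g : Fin n, p g ≤ ∑ _g : Fin n, (1:ℝ) := Finset.sum_le_sum fun g _ => hp1 g
        _ = (n:ℝ) := by simp
    calc m ≤ (1/(n:ℝ)) * (n:ℝ) := mul_le_mul_of_nonneg_left h1 (by positivity)
      _ = 1 := by field_simp
  have hiS : Integrable S P := (integrable_finset_sum _ fun g _ => hXi g).const_mul _
  have hintS : ∫ ω, S ω ∂P = m := by
    simp only [hS, hm, hp]
    rw [integral_const_mul, integral_finset_sum _ fun g _ => hXi g]
  have hXiprod : ∀ g h : Fin n, Integrable (fun ω => X g ω * X h ω) P := fun g h =>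
    ⟨((hXm g).mul (hXm h)).aestronglyMeasurable, HasFiniteIntegral.of_bounded (C := 1)
      (ae_of_all _ fun ω => by
        rw [Real.norm_eq_abs, abs_of_nonneg (mul_nonneg (hX0 g ω) (hX0 h ω))]
        calc X g ω * X h ω ≤ 1 * 1 := mul_le_mul (hX1 g ω) (hX1 h ω) (hX0 h ω) zero_le_one
          _ = 1 := one_mul 1)⟩
  have hiS2 : Integrable (fun ω => S ω ^ 2) P :=
    ⟨(hSm.pow_const 2).aestronglyMeasurable, HasFiniteIntegral.of_bounded (C := 1)
      (ae_of_all _ fun ω => by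
        rw [Real.norm_eq_abs, abs_of_nonneg (by positivity)]
        nlinarith [hS0 ω, hS1 ω])⟩
  have hintS2 : ∫ ω, S ω ^ 2 ∂P
      = (1/(n:ℝ))^2 * ∑ g : Fin n, ∑ h : Fin n, ∫ ω, X g ω * X h ω ∂P := by
    have hrw : ∀ ω, S ω ^ 2 = (1/(n:ℝ))^2 * ∑ g : Fin n, ∑ h : Fin n, X g ω * X h ω := by
      intro ω
      simp only [hS]
      rw [mul_pow, pow_two (∑ g : Fin n, X g ω), Finset.sum_mul_sum]
    simp only [hrw]
    rw [integral_const_mul,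
      integral_finset_sum _ fun g _ => integrable_finset_sum _ fun h _ => hXiprod g h]
    congr 1
    exact Finset.sum_congr rfl fun g _ => integral_finset_sum _ fun h _ => hXiprod g h
  have hcov : ∀ g h : Fin n, cov16 (X g) (X h) P = (∫ ω, X g ω * X h ω ∂P) - p g * p h := by
    intro g h
    simp only [cov16, hp]
  have hicm : Integrable (fun ω => (2*m) * S ω) P := hiS.const_mul (2*m)
  have hisub : Integrable (fun ω => S ω^2 - (2*m) * S ω) P := hiS2.sub hicm
  have hvar1 : ∫ ω, (S ω - m)^2 ∂P = (∫ ω, S ω^2 ∂P) - m^2 := by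
    have hrw : ∀ ω, (S ω - m)^2 = S ω^2 - (2*m) * S ω + m^2 := fun ω => by ring
    simp only [hrw]
    rw [integral_add hisub (integrable_const _),
        integral_sub hiS2 hicm, integral_const_mul, hintS, integral_const]
    simp only [Measure.real, measure_univ, ENNReal.toReal_one, one_smul]
    ring
  have hmsq : m^2 = (1/(n:ℝ))^2 * ∑ g : Fin n, ∑ h : Fin n, p g * p h := by
    simp only [hm]
    rw [mul_pow, pow_two (∑ g : Fin n, p g), Finset.sum_mul_sum]
  have hvar : ∫ ω, (S ω - m)^2 ∂P
      = (1/(n:ℝ))^2 * ∑ g : Fin n, ∑ h : Fin n, cov16 (X g) (X h) P := by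
    rw [hvar1, hintS2, hmsq, ← mul_sub]
    congr 1
    rw [← Finset.sum_sub_distrib]
    refine Finset.sum_congr rfl fun g _ => ?_
    rw [← Finset.sum_sub_distrib]
    exact Finset.sum_congr rfl fun h _ => (hcov g h).symm
  have hdiag : ∀ g : Fin n, cov16 (X g) (X g) P ≤ 1/4 := by
    intro g
    have hXX : (fun ω => X g ω * X g ω) = X g := funext fun ω => by
      rcases hX01 g ω with h | h <;> rw [h] <;> ring
    have hpg : ∫ ω, X g ω ∂P = p g := by simp only [hp]
    simp only [cov16]
    rw [show (∫ ω, X g ω * X g ω ∂P) = ∫ ω, X g ω ∂P from by rw [hXX], hpg]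
    nlinarith [hp0 g, hp1 g, sq_nonneg (p g - 1/2)]
  have hsum_bound : ∑ g : Fin n, ∑ h : Fin n, cov16 (X g) (X h) P ≤ (n:ℝ)/4 + C := by
    have hsplit : ∀ g : Fin n, ∑ h : Fin n, cov16 (X g) (X h) P
        = cov16 (X g) (X g) P + ∑ h ∈ Finset.univ.erase g, cov16 (X g) (X h) P :=
      fun g => (Finset.add_sum_erase _ _ (Finset.mem_univ g)).symm
    have h1 : ∑ g : Fin n, cov16 (X g) (X g) P ≤ (n:ℝ)/4 := by
      calc ∑ g : Fin n, cov16 (X g) (X g) P ≤ ∑ _g : Fin n, (1/4:ℝ) :=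
            Finset.sum_le_sum fun g _ => hdiag g
        _ = (n:ℝ)/4 := by simp; ring
    calc ∑ g : Fin n, ∑ h : Fin n, cov16 (X g) (X h) P
        = (∑ g : Fin n, cov16 (X g) (X g) P)
          + ∑ g : Fin n, ∑ h ∈ Finset.univ.erase g, cov16 (X g) (X h) P := by
          simp only [hsplit]; rw [Finset.sum_add_distrib]
      _ ≤ (n:ℝ)/4 + C := by linarith
  have hvar_bound : ∫ ω, (S ω - m)^2 ∂P ≤ (1/(n:ℝ))^2 * ((n:ℝ)/4 + C) := by
    rw [hvar]
    exact mul_le_mul_of_nonneg_left hsum_bound (by positivity)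
  have hfi : Integrable (fun ω => (S ω - m)^2) P :=
    ⟨((hSm.sub measurable_const).pow_const 2).aestronglyMeasurable,
      HasFiniteIntegral.of_bounded (C := 1) (ae_of_all _ fun ω => by
        rw [Real.norm_eq_abs, abs_of_nonneg (sq_nonneg _)]
        nlinarith [hS0 ω, hS1 ω, hm0, hm1])⟩
  have hmarkov := mul_meas_ge_le_integral_of_nonneg (μ := P)
    (ae_of_all _ fun ω => sq_nonneg (S ω - m)) hfi (a^2)
  have hsubset : {ω | a ≤ |S ω - m|} ⊆ {ω | a^2 ≤ (S ω - m)^2} := by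
    intro ω hω
    have h1 : a ≤ |S ω - m| := hω
    have : a^2 ≤ |S ω - m|^2 := pow_le_pow_left₀ ha.le h1 2
    simpa [sq_abs] using this
  have hgoal : {ω | a ≤ |(1/(n:ℝ)) * ∑ g : Fin n, X g ω
        - (1/(n:ℝ)) * ∑ g : Fin n, ∫ ω', X g ω' ∂P|} = {ω | a ≤ |S ω - m|} := by
    ext ω
    simp only [hS, hm, hp, Set.mem_setOf_eq]
  rw [hgoal]
  have ha2 : (0:ℝ) < a^2 := by positivity
  calc P {ω | a ≤ |S ω - m|} ≤ P {ω | a^2 ≤ (S ω - m)^2} := measure_mono hsubset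
    _ = ENNReal.ofReal ((P {ω | a^2 ≤ (S ω - m)^2}).toReal) :=
        (ENNReal.ofReal_toReal (measure_ne_top _ _)).symm
    _ ≤ ENNReal.ofReal (((n:ℝ)/4 + C) / ((n:ℝ)^2 * a^2)) := by
        apply ENNReal.ofReal_le_ofReal
        have h1 : (P {ω | a^2 ≤ (S ω - m)^2}).toReal ≤ (∫ ω, (S ω - m)^2 ∂P) / a^2 := by
          rw [le_div_iff₀ ha2]
          have hm' : a ^ 2 * (P {ω | a^2 ≤ (S ω - m)^2}).toReal ≤ ∫ ω, (S ω - m)^2 ∂P := hmarkov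
          linarith [hm']
        calc (P {ω | a^2 ≤ (S ω - m)^2}).toReal ≤ (∫ ω, (S ω - m)^2 ∂P) / a^2 := h1
          _ ≤ ((1/(n:ℝ))^2 * ((n:ℝ)/4 + C)) / a^2 := by gcongr
          _ = ((n:ℝ)/4 + C) / ((n:ℝ)^2 * a^2) := by
              have hnne : (n:ℝ) ≠ 0 := ne_of_gt hn0
              have hane : a ≠ 0 := ne_of_gt ha
              rw [div_eq_div_iff (pow_ne_zero 2 hane) (mul_ne_zero (pow_ne_zero 2 hnne) (pow_ne_zero 2 hane))]
              have hone : (1/(n:ℝ))^2 * (n:ℝ)^2 = 1 := by field_simp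
              calc (1/(n:ℝ))^2 * ((n:ℝ)/4 + C) * ((n:ℝ)^2 * a^2)
                  = ((1/(n:ℝ))^2 * (n:ℝ)^2) * (((n:ℝ)/4 + C) * a^2) := by ring
                _ = ((n:ℝ)/4 + C) * a^2 := by rw [hone]; ring

/-- Deterministic grid bound: two antitone `[0,1]`-valued functions that are close on a grid of
quantile points of `L` are uniformly close. -/
lemma grid16 (Lh L : ℝ → ℝ) (hLh_anti : Antitone Lh) (hL_anti : Antitone L)
    (hLh01 : ∀ t, 0 ≤ Lh t ∧ Lh t ≤ 1) (hL01 : ∀ t, 0 ≤ L t ∧ L t ≤ 1)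
    (N : ℕ) (hN2 : 2 ≤ N) (s : ℕ → ℝ)
    (hs : ∀ i, 1 ≤ i → i ≤ N-1 → L (s i) = 1 - (i:ℝ)/(N:ℝ))
    (M : ℝ) (hM0 : 0 ≤ M)
    (hM : ∀ i, 1 ≤ i → i ≤ N-1 → |Lh (s i) - L (s i)| ≤ M) :
    ∀ t, |Lh t - L t| ≤ M + 1/(N:ℝ) := by
  classical
  intro t
  have hN0 : (0:ℝ) < (N:ℝ) := by exact_mod_cast (by omega : 0 < N)
  have hN0' : (N:ℝ) ≠ 0 := ne_of_gt hN0
  have hN1 : 1 ≤ N - 1 := by omega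
  set I : Finset ℕ := (Finset.Icc 1 (N-1)).filter (fun i => s i ≤ t) with hI
  rcases I.eq_empty_or_nonempty with hIe | hIne
  · have h1mem : (1:ℕ) ∈ Finset.Icc 1 (N-1) := Finset.mem_Icc.2 ⟨le_rfl, hN1⟩
    have hts1 : ¬ (s 1 ≤ t) := by
      intro h
      have hin : (1:ℕ) ∈ I := by rw [hI]; exact Finset.mem_filter.2 ⟨h1mem, h⟩
      rw [hIe] at hin
      exact absurd hin (Finset.notMem_empty 1)
    push_neg at hts1
    have hts1' : t ≤ s 1 := hts1.le
    have hLs1 : L (s 1) = 1 - 1/(N:ℝ) := by simpa using hs 1 le_rfl hN1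
    have hM1 := abs_le.1 (hM 1 le_rfl hN1)
    have h1 := hL_anti hts1'
    have h2 := hLh_anti hts1'
    rw [abs_sub_le_iff]
    constructor
    · linarith [(hLh01 t).2]
    · linarith [(hL01 t).2]
  · set i := I.max' hIne with hidef
    have himem : i ∈ I := I.max'_mem hIne
    rw [hI] at himem
    obtain ⟨hiIcc, hsit⟩ := Finset.mem_filter.1 himem
    obtain ⟨hi1, hiN⟩ := Finset.mem_Icc.1 hiIcc
    have hLsi := hs i hi1 hiN
    have hMi := abs_le.1 (hM i hi1 hiN)
    have hLh_i := hLh_anti hsit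
    have hL_i := hL_anti hsit
    by_cases htop : i = N - 1
    · have hLsi' : L (s i) = 1/(N:ℝ) := by
        rw [hLsi, htop, Nat.cast_sub (by omega : 1 ≤ N), Nat.cast_one]
        field_simp
        ring
      rw [abs_sub_le_iff]
      constructor
      · linarith [(hL01 t).1, hMi.2]
      · linarith [(hLh01 t).1]
    · have hi1N : i + 1 ≤ N - 1 := by omega
      have hnot : ¬ s (i+1) ≤ t := by
        intro hle
        have hmem : i + 1 ∈ I := by
          rw [hI]
          exact Finset.mem_filter.2 ⟨Finset.mem_Icc.2 ⟨by omega, hi1N⟩, hle⟩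
        have hle' := I.le_max' _ hmem
        rw [← hidef] at hle'
        omega
      push_neg at hnot
      have hti1 : t ≤ s (i+1) := hnot.le
      have hLsi1 := hs (i+1) (by omega) hi1N
      have hMi1 := abs_le.1 (hM (i+1) (by omega) hi1N)
      have hgap : L (s i) - L (s (i+1)) = 1/(N:ℝ) := by
        rw [hLsi, hLsi1]
        push_cast
        field_simp
        ring
      have hLh_i1 := hLh_anti hti1
      have hL_i1 := hL_anti hti1
      rw [abs_sub_le_iff]
      constructor
      · linarith [hMi.2]
      · linarith [hMi1.1]

/-- Limit of the averaged survival function at `-∞`. -/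
lemma L_atBot16 {Ω : Type} [MeasurableSpace Ω] (P : Measure Ω) [IsProbabilityMeasure P]
    {n : ℕ} (hn : 1 ≤ n) (T : Ω → Fin n → ℝ) (hT : ∀ g, Measurable fun ω => T ω g)
    (L : ℝ → ℝ) (hL : ∀ t, L t = (1/(n:ℝ)) * ∑ g : Fin n, (P {ω | t < T ω g}).toReal) :
    Tendsto L atBot (nhds 1) := by
  have hn0 : ((n:ℝ)) ≠ 0 := Nat.cast_ne_zero.2 (by omega)
  have hper : ∀ g : Fin n, Tendsto (fun t => (P {ω | t < T ω g}).toReal) atBot (nhds 1) := by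
    intro g
    have hanti : Antitone (fun t => (P {ω | t < T ω g}).toReal) := fun t t' h =>
      ENNReal.toReal_mono (measure_ne_top _ _)
        (measure_mono fun ω hω => lt_of_le_of_lt h hω)
    have hle1 : ∀ t, (P {ω | t < T ω g}).toReal ≤ 1 := fun t => toReal_le_one16 P _
    have hseq : Tendsto (fun m : ℕ => (P {ω | (-(m:ℝ)) < T ω g}).toReal) atTop (nhds 1) := by
      have hmono : Monotone (fun m : ℕ => {ω | (-(m:ℝ)) < T ω g}) := by
        intro a b hab ω hω
        have : -(b:ℝ) ≤ -(a:ℝ) := by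
          have : (a:ℝ) ≤ b := by exact_mod_cast hab
          linarith
        exact lt_of_le_of_lt this hω
      have hun : (⋃ m : ℕ, {ω | (-(m:ℝ)) < T ω g}) = Set.univ := by
        ext ω
        simp only [Set.mem_iUnion, Set.mem_univ, iff_true, Set.mem_setOf_eq]
        obtain ⟨m, hm⟩ := exists_nat_gt (-(T ω g))
        exact ⟨m, by linarith⟩
      have h1 := tendsto_measure_iUnion_atTop (μ := P) hmono
      rw [hun, measure_univ] at h1
      have h2 := (ENNReal.tendsto_toReal (a := 1) (by simp)).comp h1
      exact h2
    rw [tendsto_order]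
    constructor
    · intro a ha
      obtain ⟨m, hm⟩ := (hseq.eventually_const_lt ha).exists
      filter_upwards [eventually_le_atBot (-(m:ℝ))] with t ht
      exact lt_of_lt_of_le hm (hanti ht)
    · intro a ha
      filter_upwards with t
      exact lt_of_le_of_lt (hle1 t) ha
  have h2 := (tendsto_finset_sum Finset.univ (fun g _ => hper g)).const_mul (1/(n:ℝ))
  have h3 : (1/(n:ℝ)) * ∑ _g : Fin n, (1:ℝ) = 1 := by
    simp
    field_simp
  rw [h3] at h2
  exact Tendsto.congr (fun t => (hL t).symm) h2

/-- Limit of the averaged survival function at `+∞`. -/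
lemma L_atTop16 {Ω : Type} [MeasurableSpace Ω] (P : Measure Ω) [IsProbabilityMeasure P]
    {n : ℕ} (hn : 1 ≤ n) (T : Ω → Fin n → ℝ) (hT : ∀ g, Measurable fun ω => T ω g)
    (L : ℝ → ℝ) (hL : ∀ t, L t = (1/(n:ℝ)) * ∑ g : Fin n, (P {ω | t < T ω g}).toReal) :
    Tendsto L atTop (nhds 0) := by
  have hn0 : ((n:ℝ)) ≠ 0 := Nat.cast_ne_zero.2 (by omega)
  have hper : ∀ g : Fin n, Tendsto (fun t => (P {ω | t < T ω g}).toReal) atTop (nhds 0) := by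
    intro g
    have hanti : Antitone (fun t => (P {ω | t < T ω g}).toReal) := fun t t' h =>
      ENNReal.toReal_mono (measure_ne_top _ _)
        (measure_mono fun ω hω => lt_of_le_of_lt h hω)
    have h0le : ∀ t, 0 ≤ (P {ω | t < T ω g}).toReal := fun t => ENNReal.toReal_nonneg
    have hseq : Tendsto (fun m : ℕ => (P {ω | (m:ℝ) < T ω g}).toReal) atTop (nhds 0) := by
      have hanti' : Antitone (fun m : ℕ => {ω | (m:ℝ) < T ω g}) := by
        intro a b hab ω hω
        have : (a:ℝ) ≤ b := by exact_mod_cast hab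
        exact lt_of_le_of_lt this hω
      have hmeas' : ∀ m : ℕ, NullMeasurableSet {ω | (m:ℝ) < T ω g} P := fun m =>
        (measurableSet_lt measurable_const (hT g)).nullMeasurableSet
      have hint : (⋂ m : ℕ, {ω | (m:ℝ) < T ω g}) = ∅ := by
        ext ω
        simp only [Set.mem_iInter, Set.mem_empty_iff_false, iff_false, not_forall,
          Set.mem_setOf_eq, not_lt]
        obtain ⟨m, hm⟩ := exists_nat_gt (T ω g)
        exact ⟨m, hm.le⟩
      have h1 := tendsto_measure_iInter_atTop (μ := P) hmeas' hanti' ⟨0, measure_ne_top _ _⟩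
      rw [hint, measure_empty] at h1
      have h2 := (ENNReal.tendsto_toReal (a := 0) (by simp)).comp h1
      exact h2
    rw [tendsto_order]
    constructor
    · intro a ha
      filter_upwards with t
      exact lt_of_lt_of_le ha (h0le t)
    · intro a ha
      obtain ⟨m, hm⟩ := (hseq.eventually_lt_const ha).exists
      filter_upwards [eventually_ge_atTop ((m:ℝ))] with t ht
      exact lt_of_le_of_lt (hanti ht) hm
  have h2 := (tendsto_finset_sum Finset.univ (fun g _ => hper g)).const_mul (1/(n:ℝ))
  have h3 : (1/(n:ℝ)) * ∑ _g : Fin n, (0:ℝ) = 0 := by simp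
  rw [h3] at h2
  exact Tendsto.congr (fun t => (hL t).symm) h2

open scoped Classical in
/-- Master lemma: uniform deviation bound for a single probability space. -/
lemma master16 {Ω : Type} [MeasurableSpace Ω] (P : Measure Ω) [IsProbabilityMeasure P]
    {n : ℕ} (hn : 1 ≤ n)
    (A : ℝ → Fin n → Set Ω) (hA : ∀ t g, MeasurableSet (A t g))
    (hanti : ∀ (g : Fin n) (t t' : ℝ), t ≤ t' → A t' g ⊆ A t g)
    (L : ℝ → ℝ) (hL : ∀ t, L t = (1/(n:ℝ)) * ∑ g : Fin n, (P (A t g)).toReal)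
    (hlimB : Tendsto L atBot (nhds 1)) (hlimT : Tendsto L atTop (nhds 0))
    (hLcont : Continuous L)
    (C : ℝ) (hC0 : 0 ≤ C)
    (hC : ∀ t : ℝ, ∑ g : Fin n, ∑ g' ∈ Finset.univ.erase g,
        cov16 (fun ω => if ω ∈ A t g then (1:ℝ) else 0)
              (fun ω => if ω ∈ A t g' then (1:ℝ) else 0) P ≤ C)
    (Lh : Ω → ℝ → ℝ)
    (hLh : ∀ ω t, Lh ω t = (1/(n:ℝ)) * ∑ g : Fin n, (if ω ∈ A t g then (1:ℝ) else 0))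
    (ε : ℝ) (hε : 0 < ε) (N : ℕ) (hN2 : 2 ≤ N) (hNε : 1/(N:ℝ) ≤ ε/2) :
    P {ω | ε < ⨆ t : ℝ, |Lh ω t - L t|}
      ≤ ENNReal.ofReal ((N:ℝ) * (((n:ℝ)/4 + C) / ((n:ℝ)^2 * (ε/2)^2))) := by
  have hn0 : (0:ℝ) < (n:ℝ) := by exact_mod_cast hn
  have hN0 : (0:ℝ) < (N:ℝ) := by exact_mod_cast (by omega : 0 < N)
  have hPt01 : ∀ t g, 0 ≤ (P (A t g)).toReal ∧ (P (A t g)).toReal ≤ 1 :=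
    fun t g => ⟨ENNReal.toReal_nonneg, toReal_le_one16 P _⟩
  have hL01 : ∀ t, 0 ≤ L t ∧ L t ≤ 1 := by
    intro t
    rw [hL]
    exact ⟨avg16_nonneg _ (fun g => (hPt01 t g).1), avg16_le_one hn _ (fun g => (hPt01 t g).2)⟩
  have hLanti : Antitone L := by
    intro t t' h
    rw [hL, hL]
    apply mul_le_mul_of_nonneg_left _ (by positivity)
    exact Finset.sum_le_sum fun g _ =>
      ENNReal.toReal_mono (measure_ne_top _ _) (measure_mono (hanti g t t' h))
  have hLh01 : ∀ ω t, 0 ≤ Lh ω t ∧ Lh ω t ≤ 1 := by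
    intro ω t
    rw [hLh]
    refine ⟨avg16_nonneg _ (fun g => by split <;> norm_num),
      avg16_le_one hn _ (fun g => by split <;> norm_num)⟩
  have hLhanti : ∀ ω, Antitone (Lh ω) := by
    intro ω t t' h
    rw [hLh, hLh]
    apply mul_le_mul_of_nonneg_left _ (by positivity)
    refine Finset.sum_le_sum fun g _ => ?_
    by_cases h' : ω ∈ A t' g
    · simp [h', hanti g t t' h h']
    · simp only [h', if_false]
      split <;> norm_num
  -- grid points
  have hex : ∀ i : ℕ, ∃ x : ℝ, 1 ≤ i → i ≤ N - 1 → L x = 1 - (i:ℝ)/(N:ℝ) := by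
    intro i
    by_cases hi : 1 ≤ i ∧ i ≤ N - 1
    · have hiN : (i:ℝ) < (N:ℝ) := by
        have : i < N := by omega
        exact_mod_cast this
      have hi0 : (0:ℝ) < (i:ℝ) := by exact_mod_cast hi.1
      have hv0 : (0:ℝ) < 1 - (i:ℝ)/(N:ℝ) := by
        have : (i:ℝ)/(N:ℝ) < 1 := (div_lt_one hN0).2 hiN
        linarith
      have hv1 : 1 - (i:ℝ)/(N:ℝ) < 1 := by
        have : 0 < (i:ℝ)/(N:ℝ) := div_pos hi0 hN0
        linarith
      obtain ⟨b, hb⟩ := (hlimT.eventually_lt_const hv0).exists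
      obtain ⟨a', ha'⟩ := (hlimB.eventually_const_lt hv1).exists
      have hmem : (1 - (i:ℝ)/(N:ℝ)) ∈ Set.uIcc (L a') (L b) :=
        Set.mem_uIcc.2 (Or.inr ⟨hb.le, ha'.le⟩)
      obtain ⟨x, _, hx⟩ := intermediate_value_uIcc (hLcont.continuousOn) hmem
      exact ⟨x, fun _ _ => hx⟩
    · exact ⟨0, fun h1 h2 => absurd ⟨h1, h2⟩ hi⟩
  choose s hs using hex
  have hint : ∀ t (g : Fin n), ∫ ω', (if ω' ∈ A t g then (1:ℝ) else 0) ∂P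
      = (P (A t g)).toReal := by
    intro t g
    have hrw : (fun ω' => if ω' ∈ A t g then (1:ℝ) else 0)
        = (A t g).indicator (fun _ => (1:ℝ)) :=
      funext fun ω' => by simp [Set.indicator_apply]
    rw [hrw, integral_indicator_const (1:ℝ) (hA t g)]
    simp
    rfl
  -- inclusion into finitely many bad events
  have hsub : {ω | ε < ⨆ t : ℝ, |Lh ω t - L t|} ⊆
      ⋃ i ∈ Finset.Icc 1 (N-1),
        {ω | ε/2 ≤ |(1/(n:ℝ)) * ∑ g : Fin n, (if ω ∈ A (s i) g then (1:ℝ) else 0)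
          - (1/(n:ℝ)) * ∑ g : Fin n, ∫ ω', (if ω' ∈ A (s i) g then (1:ℝ) else 0) ∂P|} := by
    intro ω hω
    have hω' : ε < ⨆ t : ℝ, |Lh ω t - L t| := hω
    by_contra hcon
    simp only [Set.mem_iUnion, Set.mem_setOf_eq, not_exists, not_le, exists_prop, not_and] at hcon
    have hMi : ∀ i, 1 ≤ i → i ≤ N-1 → |Lh ω (s i) - L (s i)| ≤ ε/2 := by
      intro i h1 h2
      have hc := hcon i (Finset.mem_Icc.2 ⟨h1, h2⟩)
      rw [hLh ω (s i), hL (s i)]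
      have hrw : ∑ g : Fin n, (P (A (s i) g)).toReal
          = ∑ g : Fin n, ∫ ω', (if ω' ∈ A (s i) g then (1:ℝ) else 0) ∂P :=
        Finset.sum_congr rfl fun g _ => (hint (s i) g).symm
      rw [hrw]
      exact hc.le
    have hsup : ∀ t, |Lh ω t - L t| ≤ ε/2 + 1/(N:ℝ) :=
      grid16 (Lh ω) L (hLhanti ω) hLanti (hLh01 ω) hL01 N hN2 s hs (ε/2) (by linarith) hMi
    have hb : (⨆ t : ℝ, |Lh ω t - L t|) ≤ ε/2 + 1/(N:ℝ) := ciSup_le hsup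
    linarith
  calc P {ω | ε < ⨆ t : ℝ, |Lh ω t - L t|}
      ≤ P (⋃ i ∈ Finset.Icc 1 (N-1),
        {ω | ε/2 ≤ |(1/(n:ℝ)) * ∑ g : Fin n, (if ω ∈ A (s i) g then (1:ℝ) else 0)
          - (1/(n:ℝ)) * ∑ g : Fin n, ∫ ω', (if ω' ∈ A (s i) g then (1:ℝ) else 0) ∂P|}) :=
        measure_mono hsub
    _ ≤ ∑ i ∈ Finset.Icc 1 (N-1), P
        {ω | ε/2 ≤ |(1/(n:ℝ)) * ∑ g : Fin n, (if ω ∈ A (s i) g then (1:ℝ) else 0)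
          - (1/(n:ℝ)) * ∑ g : Fin n, ∫ ω', (if ω' ∈ A (s i) g then (1:ℝ) else 0) ∂P|} :=
        measure_biUnion_finset_le _ _
    _ ≤ ∑ _i ∈ Finset.Icc 1 (N-1),
          ENNReal.ofReal (((n:ℝ)/4 + C) / ((n:ℝ)^2 * (ε/2)^2)) := by
        refine Finset.sum_le_sum fun i _ => ?_
        exact cheb16 P hn (fun g ω => if ω ∈ A (s i) g then (1:ℝ) else 0)
          (fun g => Measurable.ite (hA (s i) g) measurable_const measurable_const)
          (fun g ω => by by_cases h : ω ∈ A (s i) g <;> simp [h])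
          C (hC (s i)) (ε/2) (by linarith)
    _ = (((N-1 : ℕ) : ENNReal)) * ENNReal.ofReal (((n:ℝ)/4 + C) / ((n:ℝ)^2 * (ε/2)^2)) := by
        rw [Finset.sum_const, Nat.card_Icc]
        simp [nsmul_eq_mul]
    _ ≤ ((N : ENNReal)) * ENNReal.ofReal (((n:ℝ)/4 + C) / ((n:ℝ)^2 * (ε/2)^2)) := by
        apply mul_le_mul_left
        exact_mod_cast Nat.sub_le N 1
    _ = ENNReal.ofReal ((N:ℝ) * (((n:ℝ)/4 + C) / ((n:ℝ)^2 * (ε/2)^2))) := by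
        rw [ENNReal.ofReal_mul (by positivity : (0:ℝ) ≤ (N:ℝ)), ENNReal.ofReal_natCast]

/-- Measures transfer under sign symmetry. -/
lemma measure_neg16 {Ω : Type} [MeasurableSpace Ω] {P : Measure Ω} {n : ℕ}
    {T : Ω → Fin n → ℝ} (hmeas : ∀ g, Measurable fun ω => T ω g)
    (hsym : IdentDistrib (fun ω => fun g : Fin n => T ω g)
      (fun ω => fun g : Fin n => -(T ω g)) P P)
    (t : ℝ) (g : Fin n) :
    P {ω | T ω g < -t} = P {ω | t < T ω g} := by
  have hg : Measurable fun x : Fin n → ℝ => x g := measurable_pi_apply g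
  have hmap := (hsym.comp hg).map_eq
  have hset : {ω | t < T ω g} = (fun ω => -(T ω g)) ⁻¹' (Set.Iio (-t)) := by
    ext ω
    simp [neg_lt_neg_iff]
  have hmap' : Measure.map (fun ω => T ω g) P = Measure.map (fun ω => -(T ω g)) P := hmap
  calc P {ω | T ω g < -t}
      = Measure.map (fun ω => T ω g) P (Set.Iio (-t)) := by
        rw [Measure.map_apply (hmeas g) measurableSet_Iio]
        rfl
    _ = Measure.map (fun ω => -(T ω g)) P (Set.Iio (-t)) := by rw [hmap']
    _ = P ((fun ω => -(T ω g)) ⁻¹' (Set.Iio (-t))) := by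
        rw [Measure.map_apply (f := fun ω => -(T ω g)) ((hmeas g).neg) measurableSet_Iio]
    _ = P {ω | t < T ω g} := by rw [← hset]

/-- Covariance transfer under sign symmetry. -/
lemma cov_neg16 {Ω : Type} [MeasurableSpace Ω] {P : Measure Ω} {n : ℕ}
    {T : Ω → Fin n → ℝ}
    (hsym : IdentDistrib (fun ω => fun g : Fin n => T ω g)
      (fun ω => fun g : Fin n => -(T ω g)) P P)
    (t : ℝ) (g h : Fin n) :
    cov16 (fun ω => if T ω g < -t then (1:ℝ) else 0)
          (fun ω => if T ω h < -t then (1:ℝ) else 0) P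
      = cov16 (fun ω => if t < T ω g then (1:ℝ) else 0)
              (fun ω => if t < T ω h then (1:ℝ) else 0) P := by
  have hF : ∀ g' : Fin n, Measurable fun x : Fin n → ℝ => if x g' < -t then (1:ℝ) else 0 :=
    fun g' => Measurable.ite (measurableSet_lt (measurable_pi_apply g') measurable_const)
      measurable_const measurable_const
  have key : ∀ F : (Fin n → ℝ) → ℝ, Measurable F →
      (∫ ω, F (fun g' => T ω g') ∂P) = ∫ ω, F (fun g' => -(T ω g')) ∂P := by
    intro F hFm
    exact (hsym.comp hFm).integral_eq
  simp only [cov16]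
  have h1 := key (fun x => (if x g < -t then (1:ℝ) else 0) * (if x h < -t then (1:ℝ) else 0))
    ((hF g).mul (hF h))
  have h2 := key (fun x => if x g < -t then (1:ℝ) else 0) (hF g)
  have h3 := key (fun x => if x h < -t then (1:ℝ) else 0) (hF h)
  simp only [neg_lt_neg_iff] at h1 h2 h3
  rw [h1, h2, h3]

/-- Convergence to zero of the probability bounds. -/
lemma bnd_tendsto16 (n : ℕ → ℕ) (hn : Tendsto n atTop atTop) (c lam : ℝ)
    (hlam : lam < 2) (K a : ℝ) (ha : 0 < a) :
    Tendsto (fun k => ENNReal.ofReal (K * (((n k:ℝ)/4 + c * (n k:ℝ)^lam) / ((n k:ℝ)^2 * a^2))))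
      atTop (nhds 0) := by
  rw [← ENNReal.ofReal_zero]
  apply ENNReal.tendsto_ofReal
  have hnr : Tendsto (fun k => (n k : ℝ)) atTop atTop := tendsto_natCast_atTop_atTop.comp hn
  have hx : Tendsto (fun x : ℝ => K * ((x/4 + c * x^lam) / (x^2 * a^2))) atTop (nhds 0) := by
    have h1 : Tendsto (fun x : ℝ => x⁻¹) atTop (nhds 0) := tendsto_inv_atTop_zero
    have h2 := tendsto_rpow_neg_atTop (show (0:ℝ) < 2 - lam by linarith)
    rw [show -(2-lam) = lam - 2 by ring] at h2
    have h3 : Tendsto (fun x : ℝ => K * (a^2)⁻¹ * ((1/4) * x⁻¹ + c * x ^ (lam-2))) atTop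
        (nhds (K * (a^2)⁻¹ * ((1/4) * 0 + c * 0))) :=
      Tendsto.const_mul _ ((h1.const_mul (1/4:ℝ)).add (h2.const_mul c))
    have h4 : Tendsto (fun x : ℝ => K * (a^2)⁻¹ * ((1/4) * x⁻¹ + c * x ^ (lam-2))) atTop
        (nhds 0) := by simpa using h3
    refine Tendsto.congr' ?_ h4
    filter_upwards [eventually_ge_atTop (1:ℝ)] with x hx1
    have hx0 : (0:ℝ) < x := by linarith
    have hx0' : x ≠ 0 := ne_of_gt hx0
    have ha0 : a ≠ 0 := ne_of_gt ha
    have hpow : x ^ lam = x ^ (lam - 2) * x^2 := by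
      rw [← Real.rpow_natCast x 2, ← Real.rpow_add hx0]
      norm_num
    rw [hpow]
    field_simp
  exact hx.comp hnr

theorem stmt16 (n : ℕ → ℕ) (hn : Tendsto n atTop atTop)
    (Ω : ℕ → Type) [∀ k, MeasurableSpace (Ω k)]
    (P : (k : ℕ) → Measure (Ω k)) [∀ k, IsProbabilityMeasure (P k)]
    (T : (k : ℕ) → Ω k → Fin (n k) → ℝ)
    (hmeas : ∀ k g, Measurable fun ω => T k ω g)
    (L : ℕ → ℝ → ℝ)
    (hL : ∀ k t, L k t = (1 / (n k : ℝ)) * ∑ g : Fin (n k), (P k {ω | t < T k ω g}).toReal)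
    (hLcont : ∀ k, Continuous fun t => L k t)
    (hdep : ∃ c > (0 : ℝ), ∃ lam ∈ Set.Ioo (0 : ℝ) 2, ∀ k (t : ℝ),
      ∑ g : Fin (n k), ∑ g' ∈ Finset.univ.erase g,
        cov16 (fun ω => if t < T k ω g then (1 : ℝ) else 0)
              (fun ω => if t < T k ω g' then (1 : ℝ) else 0) (P k) ≤
        c * ((n k : ℝ)) ^ lam) :
    (∀ ε > (0 : ℝ), Tendsto (fun k => P k {ω | ε <
        ⨆ t : ℝ, |(1 / (n k : ℝ)) *
          ((Finset.univ.filter fun g : Fin (n k) => t < T k ω g).card : ℝ) - L k t|})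
      atTop (nhds 0)) ∧
    ((∀ k, IdentDistrib (fun ω => fun g : Fin (n k) => T k ω g)
        (fun ω => fun g : Fin (n k) => -(T k ω g)) (P k) (P k)) →
      ∀ ε > (0 : ℝ), Tendsto (fun k => P k {ω | ε <
        ⨆ t : ℝ, |(1 / (n k : ℝ)) *
          ((Finset.univ.filter fun g : Fin (n k) => T k ω g < -t).card : ℝ) - L k t|})
      atTop (nhds 0)) := by
  obtain ⟨c, hc, lam, hlam, hdep⟩ := hdep
  have hev : ∀ᶠ k in atTop, 1 ≤ n k := hn.eventually_ge_atTop 1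
  constructor
  · intro ε hε
    set N : ℕ := max ⌈(2/ε)⌉₊ 2 with hN
    have hN2 : 2 ≤ N := le_max_right _ _
    have hN0 : (0:ℝ) < N := by exact_mod_cast (by omega : 0 < N)
    have hNε : 1/(N:ℝ) ≤ ε/2 := by
      have h1 : (2/ε : ℝ) ≤ (N:ℝ) := le_trans (Nat.le_ceil _)
        (by exact_mod_cast le_max_left ⌈(2/ε)⌉₊ 2)
      have h2 : (2:ℝ) ≤ (N:ℝ) * ε := by
        have := (div_le_iff₀ hε).1 h1
        linarith
      rw [div_le_div_iff₀ hN0 (by norm_num : (0:ℝ) < 2)]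
      linarith
    apply tendsto_of_tendsto_of_tendsto_of_le_of_le' tendsto_const_nhds
      (bnd_tendsto16 n hn c lam hlam.2 (N:ℝ) (ε/2) (by linarith))
    · exact Eventually.of_forall fun k => zero_le
    · filter_upwards [hev] with k hk
      classical
      have hC0 : 0 ≤ c * (n k:ℝ)^lam :=
        mul_nonneg hc.le (Real.rpow_nonneg (Nat.cast_nonneg _) _)
      have hC1 : ∀ t : ℝ, ∑ g : Fin (n k), ∑ g' ∈ Finset.univ.erase g,
          cov16 (fun ω => if ω ∈ {ω' | t < T k ω' g} then (1:ℝ) else 0)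
                (fun ω => if ω ∈ {ω' | t < T k ω' g'} then (1:ℝ) else 0) (P k)
            ≤ c * (n k:ℝ)^lam := by
        intro t
        have hrw : ∀ g : Fin (n k),
            (fun ω => if ω ∈ {ω' | t < T k ω' g} then (1:ℝ) else 0)
              = fun ω => if t < T k ω g then (1:ℝ) else 0 := fun g => funext fun ω => by
          by_cases h : t < T k ω g <;> simp [h]
        calc ∑ g : Fin (n k), ∑ g' ∈ Finset.univ.erase g,
            cov16 (fun ω => if ω ∈ {ω' | t < T k ω' g} then (1:ℝ) else 0)
                  (fun ω => if ω ∈ {ω' | t < T k ω' g'} then (1:ℝ) else 0) (P k)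
            = ∑ g : Fin (n k), ∑ g' ∈ Finset.univ.erase g,
              cov16 (fun ω => if t < T k ω g then (1:ℝ) else 0)
                    (fun ω => if t < T k ω g' then (1:ℝ) else 0) (P k) := by
              refine Finset.sum_congr rfl fun g _ => Finset.sum_congr rfl fun g' _ => ?_
              rw [hrw g, hrw g']
          _ ≤ c * (n k:ℝ)^lam := hdep k t
      have hLh1 : ∀ (ω : Ω k) (t : ℝ), (1 / (n k : ℝ)) *
          ((Finset.univ.filter fun g : Fin (n k) => t < T k ω g).card : ℝ)
            = (1/(n k:ℝ)) * ∑ g : Fin (n k), (if ω ∈ {ω' | t < T k ω' g} then (1:ℝ) else 0) := by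
        intro ω t
        rw [Finset.card_filter, Nat.cast_sum]
        congr 1
        refine Finset.sum_congr rfl fun g _ => ?_
        by_cases h : t < T k ω g <;> simp [h]
      exact master16 (P k) hk (fun t g => {ω | t < T k ω g})
        (fun t g => measurableSet_lt measurable_const (hmeas k g))
        (fun g t t' h ω hω => lt_of_le_of_lt h hω)
        (L k) (hL k)
        (L_atBot16 (P k) hk (T k) (hmeas k) (L k) (hL k))
        (L_atTop16 (P k) hk (T k) (hmeas k) (L k) (hL k))
        (hLcont k)
        (c * (n k:ℝ)^lam) hC0 hC1
        (fun ω t => (1 / (n k : ℝ)) *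
          ((Finset.univ.filter fun g : Fin (n k) => t < T k ω g).card : ℝ))
        hLh1
        ε hε N hN2 hNε
  · intro hsym ε hε
    set N : ℕ := max ⌈(2/ε)⌉₊ 2 with hN
    have hN2 : 2 ≤ N := le_max_right _ _
    have hN0 : (0:ℝ) < N := by exact_mod_cast (by omega : 0 < N)
    have hNε : 1/(N:ℝ) ≤ ε/2 := by
      have h1 : (2/ε : ℝ) ≤ (N:ℝ) := le_trans (Nat.le_ceil _)
        (by exact_mod_cast le_max_left ⌈(2/ε)⌉₊ 2)
      have h2 : (2:ℝ) ≤ (N:ℝ) * ε := by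
        have := (div_le_iff₀ hε).1 h1
        linarith
      rw [div_le_div_iff₀ hN0 (by norm_num : (0:ℝ) < 2)]
      linarith
    apply tendsto_of_tendsto_of_tendsto_of_le_of_le' tendsto_const_nhds
      (bnd_tendsto16 n hn c lam hlam.2 (N:ℝ) (ε/2) (by linarith))
    · exact Eventually.of_forall fun k => zero_le
    · filter_upwards [hev] with k hk
      classical
      have hC0 : 0 ≤ c * (n k:ℝ)^lam :=
        mul_nonneg hc.le (Real.rpow_nonneg (Nat.cast_nonneg _) _)
      have hL' : ∀ t, L k t = (1/(n k:ℝ)) * ∑ g : Fin (n k), (P k {ω | T k ω g < -t}).toReal := by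
        intro t
        rw [hL k t]
        congr 1
        exact Finset.sum_congr rfl fun g _ => by
          rw [measure_neg16 (hmeas k) (hsym k) t g]
      have hC' : ∀ t : ℝ, ∑ g : Fin (n k), ∑ g' ∈ Finset.univ.erase g,
          cov16 (fun ω => if ω ∈ {ω' | T k ω' g < -t} then (1:ℝ) else 0)
                (fun ω => if ω ∈ {ω' | T k ω' g' < -t} then (1:ℝ) else 0) (P k)
            ≤ c * (n k:ℝ)^lam := by
        intro t
        have hrw : ∀ g : Fin (n k), (fun ω => if ω ∈ {ω' | T k ω' g < -t} then (1:ℝ) else 0)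
            = fun ω => if T k ω g < -t then (1:ℝ) else 0 := fun g => funext fun ω => by
          by_cases h : T k ω g < -t <;> simp [h]
        calc ∑ g : Fin (n k), ∑ g' ∈ Finset.univ.erase g,
            cov16 (fun ω => if ω ∈ {ω' | T k ω' g < -t} then (1:ℝ) else 0)
                  (fun ω => if ω ∈ {ω' | T k ω' g' < -t} then (1:ℝ) else 0) (P k)
            = ∑ g : Fin (n k), ∑ g' ∈ Finset.univ.erase g,
              cov16 (fun ω => if t < T k ω g then (1:ℝ) else 0)
                    (fun ω => if t < T k ω g' then (1:ℝ) else 0) (P k) := by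
              refine Finset.sum_congr rfl fun g _ => Finset.sum_congr rfl fun g' _ => ?_
              rw [hrw g, hrw g', cov_neg16 (hsym k) t g g']
          _ ≤ c * (n k:ℝ)^lam := hdep k t
      have hLh2 : ∀ (ω : Ω k) (t : ℝ), (1 / (n k : ℝ)) *
          ((Finset.univ.filter fun g : Fin (n k) => T k ω g < -t).card : ℝ)
            = (1/(n k:ℝ)) * ∑ g : Fin (n k), (if ω ∈ {ω' | T k ω' g < -t} then (1:ℝ) else 0) := by
        intro ω t
        rw [Finset.card_filter, Nat.cast_sum]
        congr 1
        refine Finset.sum_congr rfl fun g _ => ?_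
        by_cases h : T k ω g < -t <;> simp [h]
      have hanti2 : ∀ (g : Fin (n k)) (t t' : ℝ), t ≤ t' →
          {ω | T k ω g < -t'} ⊆ {ω | T k ω g < -t} := by
        intro g t t' h ω hω
        simp only [Set.mem_setOf_eq] at hω ⊢
        linarith
      exact master16 (P k) hk (fun t g => {ω | T k ω g < -t})
        (fun t g => measurableSet_lt (hmeas k g) measurable_const)
        hanti2
        (L k) hL'
        (L_atBot16 (P k) hk (T k) (hmeas k) (L k) (hL k))
        (L_atTop16 (P k) hk (T k) (hmeas k) (L k) (hL k))
        (hLcont k)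
        (c * (n k:ℝ)^lam) hC0 hC'
        (fun ω t => (1 / (n k : ℝ)) *
          ((Finset.univ.filter fun g : Fin (n k) => T k ω g < -t).card : ℝ))
        hLh2
        ε hε N hN2 hNε
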